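/- Define τ₀ : {a,b,c,d}* → {a,b,c,d}* as the monoid homomorphism given on letters by τ₀(a) = c, τ₀(b) = ada, τ₀(c) = aba, τ₀(d) = aca. Then for every word w, the length satisfies |τ₀(w)| ≤ 3|w|, and if w is a reduced word (alternating form with letters from {b,c,d} separated by single a's), then |τ₀(w)| ≤ 2|w| + 1. -/

import Mathlib

inductive GLetter : Type
  | a | b | c | d
deriving DecidableEq

/-- The substitution τ₀ on letters: a ↦ c, b ↦ ada, c ↦ aba, d ↦ aca. -/
def tau0Letter : GLetter → List GLetter
  | .a => [.c]
  | .b => [.a, .d, .a]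
  | .c => [.a, .b, .a]
  | .d => [.a, .c, .a]

/-- τ₀ extended multiplicatively (by concatenation) to words. -/
def tau0 (w : List GLetter) : List GLetter := (w.map tau0Letter).flatten

/-- A word is reduced if letters alternate between `a` and letters in
`{b,c,d}`, i.e. it has the form [a] x₁ a x₂ a … a x_k [a]. -/
def GIsReduced (w : List GLetter) : Prop :=
  w.Chain' fun x y => (x = GLetter.a ↔ y ≠ GLetter.a)

lemma tau0_cons (x : GLetter) (t : List GLetter) :
    tau0 (x :: t) = tau0Letter x ++ tau0 t := by
  simp [tau0]

lemma tau0Letter_length_le (x : GLetter) : (tau0Letter x).length ≤ 3 := by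
  cases x <;> simp [tau0Letter]

lemma tau0_reduced (w : List GLetter) : GIsReduced w →
    (tau0 w).length ≤ 2 * w.length + 1 ∧
      (w.head? = some GLetter.a → (tau0 w).length ≤ 2 * w.length) := by
  induction w with
  | nil => simp [tau0]
  | cons x t ih =>
    intro hred
    rw [GIsReduced, List.Chain', List.isChain_cons] at hred
    obtain ⟨hhd, hch⟩ := hred
    have iht := ih hch
    by_cases hx : x = GLetter.a
    · subst hx
      have ht : (tau0 t).length ≤ 2 * t.length + 1 := iht.1
      constructor
      · rw [tau0_cons]
        simp [tau0Letter]
        omega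
      · intro _
        rw [tau0_cons]
        simp [tau0Letter]
        omega
    · have ht : (tau0 t).length ≤ 2 * t.length := by
        cases t with
        | nil => simp [tau0]
        | cons y s =>
          apply iht.2
          have := hhd y rfl
          simp at this
          have hy : y = GLetter.a := by tauto
          simp [hy]
      constructor
      · rw [tau0_cons]
        have := tau0Letter_length_le x
        simp
        omega
      · intro h
        simp at h
        exact absurd h hx

theorem tau0_length_bounds (w : List GLetter) :
    (tau0 w).length ≤ 3 * w.length ∧
    (GIsReduced w → (tau0 w).length ≤ 2 * w.length + 1) := by
  constructor
  · induction w with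
    | nil => simp [tau0]
    | cons x t ih =>
      rw [tau0_cons]
      have := tau0Letter_length_le x
      simp
      omega
  · exact fun h => (tau0_reduced w h).1
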